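/- For all n ≥ 2, the Motzkin numbers satisfy the recurrence (n+2)·M_n = (2n+1)·M_{n-1} + 3(n-1)·M_{n-2}. -/

import Mathlib

inductive MStep where
  | U : MStep
  | D : MStep
  | H : MStep
deriving DecidableEq

/-- A word in {U,D,H} is a Motzkin path if #U = #D and no prefix has more D's than U's. -/
def IsMotzkin (w : List MStep) : Prop :=
  w.count MStep.U = w.count MStep.D ∧
  ∀ p : List MStep, p <+: w → p.count MStep.D ≤ p.count MStep.U

/-- Number of Motzkin paths of length n (the n-th Motzkin number). -/
noncomputable def motzkinNum (n : ℕ) : ℕ :=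
  Nat.card {w : List MStep // w.length = n ∧ IsMotzkin w}

/-- Number of Motzkin paths of length n with an even number of U steps. -/
noncomputable def evenMotzkin (n : ℕ) : ℕ :=
  Nat.card {w : List MStep // w.length = n ∧ IsMotzkin w ∧ Even (w.count MStep.U)}

/-- Number of Motzkin paths of length n with an odd number of U steps. -/
noncomputable def oddMotzkin (n : ℕ) : ℕ :=
  Nat.card {w : List MStep // w.length = n ∧ IsMotzkin w ∧ Odd (w.count MStep.U)}

/-- The shadow of the n-th Motzkin number: s(n) = a(n) - b(n). -/
noncomputable def shadow (n : ℕ) : ℤ :=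
  (evenMotzkin n : ℤ) - (oddMotzkin n : ℤ)

namespace MStep

theorem prefix_app {α : Type*} (p a b : List α) (h : p <+: a ++ b) :
    p <+: a ∨ ∃ r, p = a ++ r ∧ r <+: b := by
  rcases h with ⟨t, ht⟩
  rcases Nat.le_total p.length a.length with hl | hl
  · exact Or.inl (List.prefix_of_prefix_length_le ⟨t, ht⟩ (List.prefix_append a b) hl)
  · right
    rcases List.prefix_of_prefix_length_le (List.prefix_append a b) ⟨t, ht⟩ hl with ⟨r, hr⟩
    refine ⟨r, hr.symm, ?_⟩
    subst hr
    rw [List.append_assoc] at ht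
    exact ⟨t, List.append_cancel_left ht⟩

@[simp] theorem count_cons_self' (a : MStep) (l : List MStep) :
    (a :: l).count a = l.count a + 1 := List.count_cons_self (a := a) (l := l)

/-- first passage below 0 -/
theorem firstReturn : ∀ t : List MStep, t.count U < t.count D →
    ∃ w1 w2, t = w1 ++ D :: w2 ∧ w1.count U = w1.count D ∧
      ∀ p, p <+: w1 → p.count D ≤ p.count U := by
  suffices H : ∀ n (t : List MStep), t.length = n → t.count U < t.count D →
      ∃ w1 w2, t = w1 ++ D :: w2 ∧ w1.count U = w1.count D ∧
        ∀ p, p <+: w1 → p.count D ≤ p.count U by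
    exact fun t => H t.length t rfl
  intro n
  induction n using Nat.strong_induction_on with
  | _ n ih =>
  intro t hn hlt
  subst hn
  match t with
  | [] => simp at hlt
  | D :: t' =>
      exact ⟨[], t', rfl, rfl, by intro p hp; simp [List.prefix_nil.mp hp]⟩
  | H :: t' =>
      have hlt' : t'.count U < t'.count D := by simpa using hlt
      obtain ⟨w1, w2, h1, h2, h3⟩ := ih t'.length (by simp) t' rfl hlt'
      refine ⟨H :: w1, w2, by simp [h1], by simpa using h2, ?_⟩
      intro p hp
      match p with
      | [] => simp
      | H :: q =>
          have hq : q <+: w1 := by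
            rcases hp with ⟨s, hs⟩
            exact ⟨s, by simpa using hs⟩
          simpa using h3 q hq
  | U :: t' =>
      have hlt' : t'.count U < t'.count D := by
        have : t'.count U + 1 < t'.count D := by simpa using hlt
        omega
      obtain ⟨w1, w2, h1, h2, h3⟩ := ih t'.length (by simp) t' rfl hlt'
      -- now count of w2 : still too many D's
      have hw2 : w2.count U < w2.count D := by
        have := hlt
        rw [h1] at this
        simp [List.count_append] at this
        omega
      obtain ⟨v1, v2, g1, g2, g3⟩ := ih w2.length (by simp [h1]; omega) w2 rfl hw2
      refine ⟨U :: w1 ++ D :: v1, v2, by simp [h1, g1], ?_, ?_⟩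
      · simp [List.count_append]
        omega
      · intro p hp
        match p with
        | [] => simp
        | U :: q =>
            have hq : q <+: w1 ++ D :: v1 := by
              rcases hp with ⟨s, hs⟩
              exact ⟨s, by simpa using hs⟩
            rcases prefix_app q w1 (D :: v1) hq with hq1 | ⟨r, hr, hrp⟩
            · have := h3 q hq1
              simp
              omega
            · match r with
              | [] =>
                  subst hr
                  simp [List.count_append]
                  omega
              | D :: r' =>
                  have hr' : r' <+: v1 := by
                    rw [List.cons_prefix_cons] at hrp
                    exact hrp.2
                  have := g3 r' hr'
                  subst hr
                  simp [List.count_append]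
                  omega
              | U :: r' => simp [List.cons_prefix_cons] at hrp
              | H :: r' => simp [List.cons_prefix_cons] at hrp


theorem prefix_cons {α : Type*} {p : List α} {c : α} {t : List α} (h : p <+: c :: t) :
    p = [] ∨ ∃ q, p = c :: q ∧ q <+: t := by
  match p with
  | [] => exact Or.inl rfl
  | a :: q =>
      rw [List.cons_prefix_cons] at h
      exact Or.inr ⟨q, by rw [h.1], h.2⟩

theorem firstReturn_unique : ∀ w1 : List MStep, ∀ {w2 v1 v2 : List MStep},
    w1 ++ D :: w2 = v1 ++ D :: v2 →
    w1.count U = w1.count D → (∀ p, p <+: w1 → p.count D ≤ p.count U) →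
    v1.count U = v1.count D → (∀ p, p <+: v1 → p.count D ≤ p.count U) →
    w1 = v1 ∧ w2 = v2 := by
  have key : ∀ w1 : List MStep, ∀ {w2 v1 v2 : List MStep},
      w1 ++ D :: w2 = v1 ++ D :: v2 →
      w1.count U = w1.count D →
      (∀ p, p <+: v1 → p.count D ≤ p.count U) →
      ¬ w1.length < v1.length := by
    intro w1 w2 v1 v2 he h2 g3 hl
    have hp1 : w1 ++ [D] <+: v1 ++ D :: v2 := by
      rw [← he]; exact ⟨w2, by simp⟩
    have hp2 : w1 ++ [D] <+: v1 :=
      List.prefix_of_prefix_length_le hp1 (List.prefix_append v1 _) (by simp; omega)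
    have := g3 _ hp2
    simp [List.count_append] at this
    omega
  intro w1 w2 v1 v2 he h2 h3 g2 g3
  have hlen : w1.length = v1.length := by
    rcases Nat.lt_trichotomy w1.length v1.length with h | h | h
    · exact absurd h (key w1 he h2 g3)
    · exact h
    · exact absurd h (key v1 he.symm g2 h3)
  have hw : w1 = v1 := by
    have p1 : w1 <+: v1 ++ D :: v2 := by rw [← he]; exact ⟨D :: w2, rfl⟩
    have : w1 <+: v1 :=
      List.prefix_of_prefix_length_le p1 (List.prefix_append v1 _) (by omega)
    exact this.eq_of_length hlen
  subst hw
  exact ⟨rfl, by simpa using List.append_cancel_left he⟩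

theorem motzkin_H {t : List MStep} (h : IsMotzkin t) : IsMotzkin (H :: t) := by
  refine ⟨by simpa using h.1, ?_⟩
  intro p hp
  rcases prefix_cons hp with rfl | ⟨q, rfl, hq⟩
  · simp
  · simpa using h.2 q hq

theorem motzkin_UD {w1 w2 : List MStep} (h1 : IsMotzkin w1) (h2 : IsMotzkin w2) :
    IsMotzkin (U :: w1 ++ D :: w2) := by
  constructor
  · have := h1.1; have := h2.1
    simp [List.count_append]
    omega
  · intro p hp
    rcases prefix_cons hp with rfl | ⟨q, rfl, hq⟩
    · simp
    · rcases prefix_app q w1 (D :: w2) hq with hq1 | ⟨r, rfl, hrp⟩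
      · have := h1.2 q hq1
        simp; omega
      · rcases prefix_cons hrp with rfl | ⟨r', rfl, hr'⟩
        · have := h1.1
          simp [List.count_append]; omega
        · have := h1.1
          have := h2.2 r' hr'
          simp [List.count_append]; omega

instance : Fintype MStep :=
  ⟨⟨{MStep.U, MStep.D, MStep.H}, by decide⟩, by intro x; cases x <;> decide⟩

instance motzkinFinite (n : ℕ) (P : List MStep → Prop) :
    Finite {w : List MStep // w.length = n ∧ P w} := by
  have h1 : Finite {l : List MStep // l.length = n} :=
    (List.finite_length_eq MStep n).to_subtype
  exact Finite.of_injective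
    (fun w => (⟨w.1, w.2.1⟩ : {l : List MStep // l.length = n}))
    (by intro a b h; exact Subtype.ext (by simpa [Subtype.ext_iff] using h))

/-- the decomposition map -/
def dec (n : ℕ) :
    ({w : List MStep // w.length = n ∧ IsMotzkin w} ⊕
      (Σ k : Fin n, {w : List MStep // w.length = (k : ℕ) ∧ IsMotzkin w} ×
        {w : List MStep // w.length = n - 1 - (k : ℕ) ∧ IsMotzkin w})) →
    {w : List MStep // w.length = n + 1 ∧ IsMotzkin w}
  | Sum.inl ⟨t, ht⟩ => ⟨H :: t, by simp [ht.1], motzkin_H ht.2⟩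
  | Sum.inr ⟨k, ⟨w1, h1⟩, ⟨w2, h2⟩⟩ =>
      ⟨U :: w1 ++ D :: w2,
        by have := k.2; simp [h1.1, h2.1]; omega,
        motzkin_UD h1.2 h2.2⟩

theorem dec_bijective (n : ℕ) : Function.Bijective (dec n) := by
  constructor
  · rintro (⟨t, ht⟩ | ⟨k, ⟨w1, h1⟩, ⟨w2, h2⟩⟩) (⟨t', ht'⟩ | ⟨k', ⟨v1, g1⟩, ⟨v2, g2⟩⟩) he <;>
      simp only [dec, Subtype.mk.injEq] at he
    · simpa using he
    · simp at he
    · simp at he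
    · have he' : w1 ++ D :: w2 = v1 ++ D :: v2 := by simpa using he
      obtain ⟨hw, hv⟩ := firstReturn_unique w1 he' h1.2.1 h1.2.2 g1.2.1 g1.2.2
      have hk : k = k' := by
        apply Fin.ext
        rw [← h1.1, ← g1.1, hw]
      subst hk hw hv
      rfl
  · rintro ⟨w, hlen, hm⟩
    match w with
    | [] => simp at hlen
    | D :: t =>
        have := hm.2 [D] ⟨t, rfl⟩
        simp at this
    | H :: t =>
        refine ⟨Sum.inl ⟨t, by simpa using hlen, ?_, ?_⟩, rfl⟩
        · simpa using hm.1
        · intro p hp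
          rcases hp with ⟨s, hs⟩
          simpa using hm.2 (H :: p) ⟨s, by simp [hs]⟩
    | U :: t =>
        have hcount : t.count U + 1 = t.count D := by
          have := hm.1
          simp at this
          omega
        obtain ⟨w1, w2, rfl, h2, h3⟩ := firstReturn t (by omega)
        have hM1 : IsMotzkin w1 := ⟨h2, h3⟩
        have hM2 : IsMotzkin w2 := by
          constructor
          · simp [List.count_append] at hcount
            omega
          · intro p hp
            rcases hp with ⟨s, hs⟩
            have := hm.2 (U :: w1 ++ D :: p) ⟨s, by simp [← hs]⟩
            simp [List.count_append] at this
            omega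
        have hl : w1.length + w2.length + 2 = n + 1 := by simp at hlen; omega
        refine ⟨Sum.inr ⟨⟨w1.length, by omega⟩, ⟨w1, rfl, hM1⟩, ⟨w2, by simp only [Fin.val_mk]; omega, hM2⟩⟩, rfl⟩

theorem nat_card_sigma {ι : Type*} [Fintype ι] (f : ι → Type*) [∀ i, Finite (f i)] :
    Nat.card (Σ i, f i) = ∑ i, Nat.card (f i) := by
  classical
  haveI : ∀ i, Fintype (f i) := fun i => Fintype.ofFinite _
  simp [Nat.card_eq_fintype_card, Fintype.card_sigma]

end MStep

theorem motzkin_conv (n : ℕ) : motzkinNum (n + 1) =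
    motzkinNum n + ∑ k ∈ Finset.range n, motzkinNum k * motzkinNum (n - 1 - k) := by
  rw [motzkinNum, ← Nat.card_eq_of_bijective _ (MStep.dec_bijective n), Nat.card_sum,
    MStep.nat_card_sigma]
  simp only [Nat.card_prod]
  rw [Fin.sum_univ_eq_sum_range (fun k => Nat.card {w : List MStep // w.length = k ∧ IsMotzkin w} * Nat.card {w : List MStep // w.length = n - 1 - k ∧ IsMotzkin w})]
  rfl

theorem motzkin_zero : motzkinNum 0 = 1 := by
  rw [motzkinNum]
  have e : {w : List MStep // w.length = 0 ∧ IsMotzkin w} ≃ PUnit.{1} :=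
    { toFun := fun _ => PUnit.unit
      invFun := fun _ => ⟨[], rfl, rfl, by intro p hp; simp [List.prefix_nil.mp hp]⟩
      left_inv := by
        rintro ⟨w, hw, _⟩
        apply Subtype.ext
        simpa using List.length_eq_zero_iff.mp hw
      right_inv := fun _ => rfl }
  exact (Nat.card_congr e).trans (by simp)

open PowerSeries

noncomputable def MA : ℚ⟦X⟧ := PowerSeries.mk fun n => (motzkinNum n : ℚ)

theorem MA_quad : MA = 1 + X ^ 1 * MA + X ^ 2 * MA ^ 2 := by
  ext n
  simp only [map_add, coeff_one, coeff_X_pow_mul', MA, coeff_mk]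
  match n with
  | 0 => simp [motzkin_zero]
  | (n+1) =>
    rw [motzkin_conv n]
    push_cast
    match n with
    | 0 => simp [motzkin_zero]
    | (m+1) =>
      rw [if_pos (by omega : 1 ≤ m + 1)]
      simp only [show m + 1 - 1 = m from rfl]
      rw [sq, coeff_mul, Finset.Nat.sum_antidiagonal_eq_sum_range_succ_mk]
      rw [zero_add, add_right_inj]
      apply Finset.sum_congr rfl
      intro k hk
      simp [coeff_mk]

theorem MA_deriv : d⁄dX ℚ MA =
    MA + X ^ 1 * d⁄dX ℚ MA + 2 * X * MA ^ 2 + X ^ 2 * (2 * MA * d⁄dX ℚ MA) := by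
  conv_lhs => rw [MA_quad]
  simp only [map_add, map_one, Derivation.leibniz, Derivation.leibniz_pow, derivative_X,
    smul_eq_mul, nsmul_eq_mul, Derivation.map_one_eq_zero]
  push_cast
  ring

theorem MA_key : X ^ 1 * d⁄dX ℚ MA =
    2 * (X ^ 2 * d⁄dX ℚ MA) + 3 * (X ^ 3 * d⁄dX ℚ MA)
      + 3 * (X ^ 2 * MA) + 3 * (X ^ 1 * MA) - 2 * MA + 2 := by
  linear_combination (2 + 4*X^2*MA + 4*X^3*(d⁄dX ℚ MA)) * MA_quad
    + (X - X^2 - 2*X^3*MA) * MA_deriv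

theorem motzkin_rat (k : ℕ) :
    ((k : ℚ) + 3 + 2) * motzkinNum (k+3) =
      (2*((k:ℚ)+3)+1) * motzkinNum (k+2) + 3*((k:ℚ)+3-1) * motzkinNum (k+1) := by
  have hc := congrArg (PowerSeries.coeff (R := ℚ) (k+3)) MA_key
  simp only [show (2:ℚ⟦X⟧) = PowerSeries.C (R := ℚ) 2 from (map_ofNat (PowerSeries.C (R := ℚ)) 2).symm,
    show (3:ℚ⟦X⟧) = PowerSeries.C (R := ℚ) 3 from (map_ofNat (PowerSeries.C (R := ℚ)) 3).symm,
    map_add, map_sub, coeff_C_mul, coeff_X_pow_mul', coeff_C, coeff_derivative, MA, coeff_mk]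
    at hc
  rw [if_pos (by omega : 1 ≤ k + 3), if_pos (by omega : 2 ≤ k + 3),
    if_pos (by omega : 3 ≤ k + 3), if_neg (by omega : ¬ (k + 3 = 0))] at hc
  simp only [show k + 3 - 1 = k + 2 from rfl, show k + 3 - 2 = k + 1 from rfl,
    show k + 3 - 3 = k from rfl] at hc
  push_cast at hc ⊢
  linear_combination hc

theorem motzkin_one : motzkinNum 1 = 1 := by
  have := motzkin_conv 0
  simpa [motzkin_zero] using this

theorem motzkin_two : motzkinNum 2 = 2 := by
  have := motzkin_conv 1
  simpa [motzkin_zero, motzkin_one] using this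


theorem stmt_2 : ∀ n : ℕ, 2 ≤ n →
    (n + 2) * motzkinNum n =
      (2 * n + 1) * motzkinNum (n - 1) + 3 * (n - 1) * motzkinNum (n - 2) := by
  intro n hn
  match n, hn with
  | 2, _ => simp [motzkin_two, motzkin_one, motzkin_zero]
  | (k+3), _ =>
      have h := motzkin_rat k
      have : ((k:ℚ)+3+2) * motzkinNum (k+3) = ((k+3+2 : ℕ) : ℚ) * ((motzkinNum (k+3) : ℕ) : ℚ) := by
        push_cast; ring
      simp only [show k+3-1 = k+2 from rfl, show k+3-2 = k+1 from rfl]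
      have goal : ((k+3+2) * motzkinNum (k+3) : ℚ) =
          ((2*(k+3)+1) * motzkinNum (k+2) + 3*(k+3-1) * motzkinNum (k+1) : ℕ) := by
        push_cast
        linear_combination h
      exact_mod_cast goal
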